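/- Let m be a positive integer. Then for all natural numbers n and k with k ≤ n, the two explicit formulas for the Whitney numbers of the second kind agree: ∑_{i=k}^n C(n,i)·m^{i−k}·S(i,k) = (1/(m^k k!)) ∑_{i=0}^k (−1)^{k−i} C(k,i) (mi+1)^n. -/

import Mathlib

open Finset

lemma alt_vanish : ∀ k : ℕ, ∀ i < k,
    ∑ j ∈ range (k + 1), (-1 : ℚ) ^ (k - j) * (k.choose j) * (j : ℚ) ^ i = 0 := by
  intro k
  induction k with
  | zero => intro i hi; omega
  | succ k ih =>
    intro i hi
    match i with
    | 0 =>
      have h := add_pow (1 : ℚ) (-1) (k + 1)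
      simp only [one_pow, one_mul] at h
      have h0 : ((1 : ℚ) + -1) ^ (k + 1) = 0 := by norm_num
      rw [h0] at h
      simp only [pow_zero, mul_one]
      rw [← h]
    | i + 1 =>
      rw [Finset.sum_range_succ']
      have hz : (-1 : ℚ) ^ (k + 1 - 0) * (((k+1).choose 0 : ℕ) : ℚ) * ((0 : ℕ) : ℚ) ^ (i + 1) = 0 := by
        simp
      rw [hz, add_zero]
      have key : ∀ t ∈ range (k + 1),
          (-1 : ℚ) ^ (k + 1 - (t + 1)) * (((k+1).choose (t+1) : ℕ) : ℚ) * ((t + 1 : ℕ) : ℚ) ^ (i + 1)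
          = (k + 1 : ℚ) * ∑ s ∈ range (i + 1),
              (i.choose s : ℚ) * ((-1 : ℚ) ^ (k - t) * (k.choose t) * (t : ℚ) ^ s) := by
        intro t ht
        have hch : (((k+1).choose (t+1) : ℕ) : ℚ) * ((t : ℚ) + 1) = (k + 1 : ℚ) * (k.choose t : ℚ) := by
          have := Nat.add_one_mul_choose_eq k t
          have h2 : ((k+1 : ℕ) * k.choose t : ℕ) = ((k+1).choose (t+1) * (t+1) : ℕ) := this
          have h2q : ((k:ℚ)+1) * (k.choose t : ℚ) = ((k+1).choose (t+1) : ℚ) * ((t:ℚ)+1) := by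
            exact_mod_cast h2
          linear_combination h2q.symm
        have hk1 : k + 1 - (t + 1) = k - t := by omega
        have hstep : (-1 : ℚ) ^ (k + 1 - (t + 1)) * (((k+1).choose (t+1) : ℕ) : ℚ) * ((t + 1 : ℕ) : ℚ) ^ (i + 1)
            = (k + 1 : ℚ) * (k.choose t : ℚ) * ((-1 : ℚ) ^ (k - t) * ((t : ℚ) + 1) ^ i) := by
          rw [hk1]
          push_cast
          linear_combination ((-1 : ℚ) ^ (k - t) * ((t : ℚ) + 1) ^ i) * hch
        rw [hstep]
        have hexp : ((t : ℚ) + 1) ^ i = ∑ s ∈ range (i + 1), (t : ℚ) ^ s * (i.choose s : ℚ) := by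
          simpa using add_pow (t : ℚ) 1 i
        rw [hexp, Finset.mul_sum, Finset.mul_sum, Finset.mul_sum]
        exact Finset.sum_congr rfl fun s hs => by ring
      rw [Finset.sum_congr rfl key, ← Finset.mul_sum, Finset.sum_comm]
      rw [Finset.sum_eq_zero, mul_zero]
      intro s hs
      rw [← Finset.mul_sum, ih s (by simp at hs; omega), mul_zero]


/-- Stirling numbers of the second kind (as rationals):
`S(n,k) = (1/k!) ∑_{j=0}^k (−1)^{k−j} C(k,j) j^n`. -/
noncomputable def stirling2q (n k : ℕ) : ℚ :=
  (1 / (k.factorial : ℚ)) *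
    ∑ j ∈ Finset.range (k + 1), (-1 : ℚ) ^ (k - j) * (k.choose j) * (j : ℚ) ^ n

/-- The two explicit formulas for the Whitney numbers of the second kind agree:
`∑_{i=k}^n C(n,i)·m^{i−k}·S(i,k) = (1/(m^k k!)) ∑_{i=0}^k (−1)^{k−i} C(k,i) (mi+1)^n`. -/
theorem whitney2_formulas_agree (m : ℕ) (hm : 0 < m) (n k : ℕ) (hk : k ≤ n) :
    ∑ i ∈ Finset.Icc k n, (n.choose i : ℚ) * (m : ℚ) ^ (i - k) * stirling2q i k =
      (1 / ((m : ℚ) ^ k * k.factorial)) *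
        ∑ i ∈ Finset.range (k + 1), (-1 : ℚ) ^ (k - i) * (k.choose i) * ((m : ℚ) * i + 1) ^ n := by
  have hm0 : (m : ℚ) ≠ 0 := by positivity
  have hf0 : (k.factorial : ℚ) ≠ 0 := by positivity
  have hS : ∑ j ∈ range (k + 1), (-1 : ℚ) ^ (k - j) * (k.choose j) * ((m : ℚ) * j + 1) ^ n
      = ∑ i ∈ Ico k (n + 1), (n.choose i : ℚ) * (m : ℚ) ^ i *
          ∑ j ∈ range (k + 1), (-1 : ℚ) ^ (k - j) * (k.choose j) * (j : ℚ) ^ i := by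
    have step1 : ∑ j ∈ range (k + 1), (-1 : ℚ) ^ (k - j) * (k.choose j) * ((m : ℚ) * j + 1) ^ n
        = ∑ i ∈ range (n + 1), (n.choose i : ℚ) * (m : ℚ) ^ i *
            ∑ j ∈ range (k + 1), (-1 : ℚ) ^ (k - j) * (k.choose j) * (j : ℚ) ^ i := by
      calc ∑ j ∈ range (k + 1), (-1 : ℚ) ^ (k - j) * (k.choose j) * ((m : ℚ) * j + 1) ^ n
          = ∑ j ∈ range (k + 1), ∑ i ∈ range (n + 1),
              (-1 : ℚ) ^ (k - j) * (k.choose j) * (((m : ℚ) * j) ^ i * (n.choose i)) := by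
            refine Finset.sum_congr rfl fun j hj => ?_
            have hexp : ((m : ℚ) * j + 1) ^ n
                = ∑ i ∈ range (n + 1), ((m : ℚ) * j) ^ i * (n.choose i) := by
              simpa using add_pow ((m : ℚ) * j) 1 n
            rw [hexp, Finset.mul_sum]
        _ = ∑ i ∈ range (n + 1), ∑ j ∈ range (k + 1),
              (-1 : ℚ) ^ (k - j) * (k.choose j) * (((m : ℚ) * j) ^ i * (n.choose i)) :=
            Finset.sum_comm
        _ = ∑ i ∈ range (n + 1), (n.choose i : ℚ) * (m : ℚ) ^ i *
              ∑ j ∈ range (k + 1), (-1 : ℚ) ^ (k - j) * (k.choose j) * (j : ℚ) ^ i := by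
            refine Finset.sum_congr rfl fun i hi => ?_
            rw [Finset.mul_sum]
            refine Finset.sum_congr rfl fun j hj => ?_
            rw [mul_pow]
            ring
    rw [step1, ← Finset.sum_range_add_sum_Ico _ (by omega : k ≤ n + 1)]
    have hz : ∑ i ∈ range k, (n.choose i : ℚ) * (m : ℚ) ^ i *
        ∑ j ∈ range (k + 1), (-1 : ℚ) ^ (k - j) * (k.choose j) * (j : ℚ) ^ i = 0 := by
      refine Finset.sum_eq_zero fun i hi => ?_
      rw [alt_vanish k i (by simp at hi; omega), mul_zero]
    rw [hz, zero_add]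
  rw [hS, Finset.mul_sum, ← Finset.Ico_add_one_right_eq_Icc]
  refine Finset.sum_congr rfl fun i hi => ?_
  have hki : k ≤ i := (Finset.mem_Ico.mp hi).1
  have hpow : (m : ℚ) ^ i = (m : ℚ) ^ k * (m : ℚ) ^ (i - k) := by
    rw [← pow_add]; congr 1; omega
  rw [stirling2q, hpow]
  field_simp
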